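/- Let X be a topological space that is Hausdorff, locally compact, paracompact and totally disconnected. Then the Čech–Stone compactification StoneCech X is totally disconnected (and hence, being compact Hausdorff, is a Stone space). -/

import Mathlib

open Set Relation

/-- The reachable set of a point under a relation with finite out-neighborhoods
is countable. -/
private lemma aux_countable_reach {I : Type*} (r : I → I → Prop)
    (hfin : ∀ k, {j | r k j}.Finite) (i : I) :
    {j | Relation.ReflTransGen r i j}.Countable := by
  let F : ℕ → Set I := fun n => Nat.rec ({i} : Set I)
    (fun _ Fn => Fn ∪ ⋃ k ∈ Fn, {j | r k j}) n
  have hF0 : F 0 = {i} := rfl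
  have hFs : ∀ n, F (n + 1) = F n ∪ ⋃ k ∈ F n, {j | r k j} := fun n => rfl
  have hFfin : ∀ n, (F n).Finite := by
    intro n
    induction n with
    | zero => simp [hF0]
    | succ n ih =>
      rw [hFs]
      exact ih.union (ih.biUnion fun k _ => hfin k)
  have hsub : {j | Relation.ReflTransGen r i j} ⊆ ⋃ n, F n := by
    intro j hj
    induction hj with
    | refl => exact mem_iUnion.2 ⟨0, by simp [hF0]⟩
    | tail _ hbc ih =>
      obtain ⟨n, hn⟩ := mem_iUnion.1 ih
      exact mem_iUnion.2 ⟨n + 1, by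
        rw [hFs]; exact Or.inr (mem_biUnion hn hbc)⟩
  exact (Set.countable_iUnion fun n => (hFfin n).countable).mono hsub

/-- In a locally compact Hausdorff totally disconnected space, every point of an open
set has a compact clopen neighborhood inside it. -/
private lemma aux_compact_clopen_nhd {X : Type*} [TopologicalSpace X] [T2Space X]
    [LocallyCompactSpace X] [TotallyDisconnectedSpace X] {x : X} {U : Set X}
    (hU : IsOpen U) (hx : x ∈ U) :
    ∃ V : Set X, IsCompact V ∧ IsClopen V ∧ x ∈ V ∧ V ⊆ U := by
  obtain ⟨K, hKc, hxK, hKU⟩ := exists_compact_subset hU hx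
  obtain ⟨V, hVcl, hxV, hVK⟩ :=
    loc_compact_Haus_tot_disc_of_zero_dim.exists_subset_of_mem_open hxK isOpen_interior
  exact ⟨V, hKc.of_isClosed_subset hVcl.isClosed (hVK.trans interior_subset),
    hVcl, hxV, (hVK.trans interior_subset).trans hKU⟩

/-- Strong zero-dimensionality: in a locally compact paracompact Hausdorff totally
disconnected space, disjoint closed sets can be separated by a clopen set. -/
private lemma aux_clopen_separation {X : Type*} [TopologicalSpace X] [T2Space X]
    [LocallyCompactSpace X] [ParacompactSpace X] [TotallyDisconnectedSpace X]
    {C D : Set X} (hC : IsClosed C) (hD : IsClosed D) (hCD : Disjoint C D) :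
    ∃ B : Set X, IsClopen B ∧ C ⊆ B ∧ Disjoint B D := by
  classical
  -- a cover by compact clopen neighborhoods
  choose K hKcpt hKclopen hxK hKuniv using
    fun x : X => aux_compact_clopen_nhd (isOpen_univ (X := X)) (mem_univ x)
  clear hKuniv
  obtain ⟨v, hvo, hvU, hvlf, hvK⟩ := precise_refinement K (fun x => (hKclopen x).isOpen)
    (by ext y; simp only [mem_iUnion, mem_univ, iff_true]; exact ⟨y, hxK y⟩)
  -- the "chain" relation
  set r : X → X → Prop := fun a b => (closure (v a) ∩ closure (v b)).Nonempty with hr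
  have hr_symm : Symmetric r := fun a b ⟨x, hx⟩ => ⟨x, hx.2, hx.1⟩
  have hclv_sub : ∀ a, closure (v a) ⊆ K a :=
    fun a => closure_minimal (hvK a) (hKclopen a).isClosed
  have hclv_cpt : ∀ a, IsCompact (closure (v a)) :=
    fun a => (hKcpt a).of_isClosed_subset isClosed_closure (hclv_sub a)
  have hfin : ∀ a, {b | r a b}.Finite := by
    intro a
    have := hvlf.closure.finite_nonempty_inter_compact (hclv_cpt a)
    exact this.subset fun b hb => hb.mono (inter_comm _ _).le
  set comp : X → Set X := fun a => {b | Relation.ReflTransGen r a b} with hcompdef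
  have hcomp_count : ∀ a, (comp a).Countable := fun a => aux_countable_reach r hfin a
  have hcomp_self : ∀ a, a ∈ comp a := fun a => Relation.ReflTransGen.refl
  set A : X → Set X := fun a => ⋃ b ∈ comp a, v b with hAdef
  have hA_open : ∀ a, IsOpen (A a) := fun a => isOpen_biUnion fun b _ => hvo b
  have hvc_of_mem : ∀ x : X, ∃ c, x ∈ v c := by
    intro x
    have : x ∈ ⋃ c, v c := hvU ▸ mem_univ x
    exact mem_iUnion.1 this
  have hclvA : ∀ a, ∀ b ∈ comp a, closure (v b) ⊆ A a := by
    intro a b hb x hx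
    obtain ⟨c, hc⟩ := hvc_of_mem x
    have hrbc : r b c := ⟨x, hx, subset_closure hc⟩
    exact mem_biUnion (hb.tail hrbc) hc
  have hA_closed : ∀ a, IsClosed (A a) := by
    intro a
    have hbU : A a = ⋃ b : comp a, v b := by
      rw [hAdef]; exact biUnion_eq_iUnion _ _
    rw [hbU]
    have hlf' : LocallyFinite fun b : comp a => v (b : X) :=
      hvlf.comp_injective Subtype.val_injective
    refine isClosed_of_closure_subset ?_
    rw [hlf'.closure_iUnion]
    exact iUnion_subset fun b => hbU ▸ (hclvA a b b.2)
  have hA_clopen : ∀ a, IsClopen (A a) := fun a => ⟨hA_closed a, hA_open a⟩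
  have hmemA : ∀ a, ∀ b ∈ comp a, v b ⊆ A a := fun a b hb x hx => mem_biUnion hb hx
  -- the per-component clopen separation
  have hpiece : ∀ a : X, ∃ Bp : Set X, IsOpen Bp ∧ Bp ⊆ A a ∧ (C ∩ A a ⊆ Bp) ∧
      Disjoint Bp D ∧ IsOpen (A a \ Bp) := by
    intro a
    obtain ⟨e, he⟩ := (hcomp_count a).exists_eq_range ⟨a, hcomp_self a⟩
    set T : ℕ → Set X := fun n => K (e n) ∩ A a with hTdef
    have hT_clopen : ∀ n, IsClopen (T n) := fun n => (hKclopen _).inter (hA_clopen a)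
    have hT_cpt : ∀ n, IsCompact (T n) := fun n => (hKcpt _).inter_right (hA_closed a)
    have hT_sub : ∀ n, T n ⊆ A a := fun n => inter_subset_right
    have hvT : ∀ n, closure (v (e n)) ⊆ T n := by
      intro n
      refine subset_inter (hclv_sub _) (hclvA a (e n) ?_)
      rw [he]; exact mem_range_self n
    have hTcov : ∀ x ∈ A a, ∃ n, x ∈ T n := by
      intro x hx
      obtain ⟨b, hb, hxb⟩ := mem_iUnion₂.1 hx
      obtain ⟨n, rfl⟩ : b ∈ range e := he ▸ hb
      exact ⟨n, hvT n (subset_closure hxb)⟩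
    -- choose clopen R n with C ∩ T n ⊆ R n ⊆ T n, R n disjoint from D
    have hRex : ∀ n, ∃ R : Set X, IsClopen R ∧ C ∩ T n ⊆ R ∧ R ⊆ T n ∧ Disjoint R D := by
      intro n
      have hO : IsOpen (T n \ D) := (hT_clopen n).isOpen.sdiff hD
      have hcc : ∀ x ∈ C ∩ T n, ∃ V : Set X, IsClopen V ∧ x ∈ V ∧ V ⊆ T n \ D := by
        intro x hx
        have hxO : x ∈ T n \ D := ⟨hx.2, fun hxD => hCD.le_bot ⟨hx.1, hxD⟩⟩
        obtain ⟨V, hVcl, hxV, hVsub⟩ :=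
          loc_compact_Haus_tot_disc_of_zero_dim.exists_subset_of_mem_open hxO hO
        exact ⟨V, hVcl, hxV, hVsub⟩
      choose! V hVcl hVmem hVsub using hcc
      have hcptCT : IsCompact (C ∩ T n) := (hT_cpt n).inter_left hC
      obtain ⟨t, ht⟩ := hcptCT.elim_finite_subcover (fun x : X => if x ∈ C ∩ T n then V x else ∅)
        (fun x => by
          by_cases hx : x ∈ C ∩ T n
          · simpa [hx] using (hVcl x hx).isOpen
          · simp [hx])
        (fun x hx => mem_iUnion.2 ⟨x, by simpa [hx] using hVmem x hx⟩)
      refine ⟨⋃ x ∈ t, if x ∈ C ∩ T n then V x else ∅, ?_, ?_, ?_, ?_⟩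
      · exact isClopen_biUnion_finset fun x _ => by
          by_cases hx : x ∈ C ∩ T n <;> simp [hx, hVcl, isClopen_empty]
      · exact ht
      · refine iUnion₂_subset fun x _ => ?_
        by_cases hx : x ∈ C ∩ T n
        · simpa [hx] using (hVsub x hx).trans diff_subset
        · simp [hx]
      · rw [Set.disjoint_left]
        intro y hy hyD
        obtain ⟨x, -, hyx⟩ := mem_iUnion₂.1 hy
        by_cases hx : x ∈ C ∩ T n
        · simp only [hx, if_true] at hyx
          exact (hVsub x hx hyx).2 hyD
        · simp [hx] at hyx
    choose R hRclopen hRC hRT hRD using hRex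
    set S : ℕ → Set X := fun n => T n \ R n with hSdef
    have hS_clopen : ∀ n, IsClopen (S n) := fun n => (hT_clopen n).diff (hRclopen n)
    set Bp : Set X := ⋃ n, (R n \ ⋃ m ∈ Finset.range (n + 1), S m) with hBpdef
    set Bq : Set X := ⋃ n, (S n \ ⋃ m ∈ Finset.range (n + 1), R m) with hBqdef
    have hBp_open : IsOpen Bp := isOpen_iUnion fun n =>
      ((hRclopen n).diff (isClopen_biUnion_finset fun m _ => hS_clopen m)).isOpen
    have hBq_open : IsOpen Bq := isOpen_iUnion fun n =>
      ((hS_clopen n).diff (isClopen_biUnion_finset fun m _ => hRclopen m)).isOpen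
    have hBp_sub : Bp ⊆ A a := iUnion_subset fun n =>
      (diff_subset.trans (hRT n)).trans (hT_sub n)
    have hBq_sub : Bq ⊆ A a := iUnion_subset fun n =>
      (diff_subset.trans diff_subset).trans (hT_sub n)
    -- every x in A a with x ∈ C lands in Bp; every x ∈ A a is in Bp ∪ Bq
    have hmin : ∀ x ∈ A a, ∃ n, x ∈ T n ∧ ∀ m < n, x ∉ T m := by
      intro x hx
      have hex : ∃ n, x ∈ T n := hTcov x hx
      exact ⟨Nat.find hex, Nat.find_spec hex, fun m hm => Nat.find_min hex hm⟩
    have hstep : ∀ x ∈ A a, (x ∈ C → x ∈ Bp) ∧ (x ∈ Bp ∨ x ∈ Bq) := by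
      intro x hx
      obtain ⟨n, hxn, hmin'⟩ := hmin x hx
      have hnotS : ∀ m < n, x ∉ S m := fun m hm hs => hmin' m hm hs.1
      have hnotR : ∀ m < n, x ∉ R m := fun m hm hr' => hmin' m hm (hRT m hr')
      by_cases hxR : x ∈ R n
      · have hxBp : x ∈ Bp := by
          refine mem_iUnion.2 ⟨n, hxR, ?_⟩
          intro hmem
          obtain ⟨m, hm, hxm⟩ := mem_iUnion₂.1 hmem
          rcases Nat.lt_or_ge m n with h | h
          · exact hnotS m h hxm
          · have : m = n := le_antisymm (Nat.lt_succ_iff.1 (Finset.mem_range.1 hm)) h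
            exact hxm.2 (this ▸ hxR)
        exact ⟨fun _ => hxBp, Or.inl hxBp⟩
      · have hxS : x ∈ S n := ⟨hxn, hxR⟩
        have hxBq : x ∈ Bq := by
          refine mem_iUnion.2 ⟨n, hxS, ?_⟩
          intro hmem
          obtain ⟨m, hm, hxm⟩ := mem_iUnion₂.1 hmem
          rcases Nat.lt_or_ge m n with h | h
          · exact hnotR m h hxm
          · have : m = n := le_antisymm (Nat.lt_succ_iff.1 (Finset.mem_range.1 hm)) h
            exact hxR (this ▸ hxm)
        refine ⟨fun hxC => absurd (hRC n ⟨hxC, hxn⟩) hxR, Or.inr hxBq⟩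
    have hBpBq : Bp ∩ Bq = ∅ := by
      rw [eq_empty_iff_forall_notMem]
      rintro x ⟨hp, hq⟩
      obtain ⟨n, hxR, hnS⟩ := mem_iUnion.1 hp
      obtain ⟨k, hxS, hkR⟩ := mem_iUnion.1 hq
      rcases le_or_gt k n with h | h
      · exact hnS (mem_biUnion (Finset.mem_range.2 (Nat.lt_succ_of_le h)) hxS)
      · exact hkR (mem_biUnion (Finset.mem_range.2 (Nat.lt_succ_of_le h.le)) hxR)
    refine ⟨Bp, hBp_open, hBp_sub, fun x hx => (hstep x hx.2).1 hx.1, ?_, ?_⟩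
    · -- Bp disjoint from D
      rw [Set.disjoint_left]
      intro x hx hxD
      obtain ⟨n, hxR, -⟩ := mem_iUnion.1 hx
      exact (hRD n).le_bot ⟨hxR, hxD⟩
    · -- A a \ Bp = Bq is open
      have : A a \ Bp = Bq := by
        apply Subset.antisymm
        · rintro x ⟨hxA, hxBp⟩
          rcases (hstep x hxA).2 with h | h
          · exact absurd h hxBp
          · exact h
        · intro x hx
          refine ⟨hBq_sub hx, fun hxp => ?_⟩
          rw [eq_empty_iff_forall_notMem] at hBpBq
          exact hBpBq x ⟨hxp, hx⟩
      rw [this]; exact hBq_open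
  choose Bp hBp_open hBp_sub hBp_C hBp_D hBp_diff using hpiece
  -- glue along the components, one per equivalence class
  let s : Setoid X := ⟨fun a b => Relation.ReflTransGen r a b,
    ⟨fun _ => Relation.ReflTransGen.refl, fun h => (letI : Std.Symm r := ⟨fun _ _ h => hr_symm h⟩; Std.Symm.symm (r := Relation.ReflTransGen r) _ _ h),
      fun h h' => h.trans h'⟩⟩
  have hA_mem_of_rel : ∀ a b : X, Relation.ReflTransGen r a b → ∀ c ∈ comp b, c ∈ comp a :=
    fun a b hab c hc => hab.trans hc
  have hA_cover : ∀ x : X, ∃ q : Quotient s, x ∈ A q.out := by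
    intro x
    obtain ⟨c, hc⟩ := hvc_of_mem x
    have hrel : Relation.ReflTransGen r ((Quotient.mk s c).out) c :=
      Quotient.exact (Quotient.out_eq (Quotient.mk s c))
    exact ⟨Quotient.mk s c, hmemA _ c hrel hc⟩
  have hA_disj : ∀ q q' : Quotient s, q ≠ q' → A q.out ∩ A q'.out = ∅ := by
    intro q q' hne
    rw [eq_empty_iff_forall_notMem]
    rintro x ⟨hx, hx'⟩
    obtain ⟨b, hb, hxb⟩ := mem_iUnion₂.1 hx
    obtain ⟨b', hb', hxb'⟩ := mem_iUnion₂.1 hx'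
    have hbb' : r b b' := ⟨x, subset_closure hxb, subset_closure hxb'⟩
    have : Relation.ReflTransGen r q.out q'.out :=
      ((hb.tail hbb').trans ((letI : Std.Symm r := ⟨fun _ _ h => hr_symm h⟩; Std.Symm.symm (r := Relation.ReflTransGen r) _ _ hb')))
    exact hne (by
      have := Quotient.sound (s := s) this
      rwa [Quotient.out_eq, Quotient.out_eq] at this)
  refine ⟨⋃ q : Quotient s, Bp q.out, ⟨?_, isOpen_iUnion fun q => hBp_open _⟩, ?_, ?_⟩
  · -- closed: complement is the union of the A q.out \ Bp q.out
    have hcompl : (⋃ q : Quotient s, Bp q.out)ᶜ = ⋃ q : Quotient s, (A q.out \ Bp q.out) := by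
      ext x
      simp only [mem_compl_iff, mem_iUnion, not_exists]
      constructor
      · intro hx
        obtain ⟨q, hq⟩ := hA_cover x
        exact ⟨q, hq, hx _⟩
      · rintro ⟨q, hxA, hxB⟩ q' hxB'
        by_cases hqq : q = q'
        · exact hxB (hqq ▸ hxB')
        · have := hA_disj q q' hqq
          rw [eq_empty_iff_forall_notMem] at this
          exact this x ⟨hxA, hBp_sub _ hxB'⟩
    rw [← isOpen_compl_iff, hcompl]
    exact isOpen_iUnion fun q => hBp_diff _
  · intro x hx
    obtain ⟨q, hq⟩ := hA_cover x
    exact mem_iUnion.2 ⟨q, hBp_C _ ⟨hx, hq⟩⟩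
  · rw [Set.disjoint_left]
    intro x hx hxD
    obtain ⟨q, hq⟩ := mem_iUnion.1 hx
    exact (hBp_D q.out).le_bot ⟨hq, hxD⟩

/-- The Čech–Stone compactification of a locally compact paracompact totally
disconnected Hausdorff space is totally disconnected (hence a Stone space). -/
theorem stoneCech_totallyDisconnected {X : Type*} [TopologicalSpace X] [T2Space X]
    [LocallyCompactSpace X] [ParacompactSpace X] [TotallyDisconnectedSpace X] :
    TotallyDisconnectedSpace (StoneCech X) := by
  rw [loc_compact_t2_tot_disc_iff_tot_sep]
  rw [totallySeparatedSpace_iff_exists_isClopen]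
  intro x y hxy
  -- disjoint open sets with disjoint closures
  obtain ⟨U₀, V₀, hU₀, hV₀, hxU₀, hyV₀, hUV₀⟩ := t2_separation hxy
  obtain ⟨Nx, ⟨hNx_mem, hNx_closed⟩, hNxU⟩ := (closed_nhds_basis x).mem_iff.1 (hU₀.mem_nhds hxU₀)
  obtain ⟨Ny, ⟨hNy_mem, hNy_closed⟩, hNyV⟩ := (closed_nhds_basis y).mem_iff.1 (hV₀.mem_nhds hyV₀)
  -- closed disjoint subsets of X
  set C : Set X := stoneCechUnit ⁻¹' Nx with hCdef
  set D : Set X := stoneCechUnit ⁻¹' Ny with hDdef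
  have hC : IsClosed C := hNx_closed.preimage continuous_stoneCechUnit
  have hD : IsClosed D := hNy_closed.preimage continuous_stoneCechUnit
  have hCD : Disjoint C D := by
    rw [Set.disjoint_left]
    intro z hz hz'
    exact hUV₀.le_bot ⟨hNxU hz, hNyV hz'⟩
  obtain ⟨B, hB, hCB, hBD⟩ := aux_clopen_separation hC hD hCD
  -- extend the Bool-valued indicator of B to the compactification
  have hf : Continuous B.boolIndicator := (continuous_boolIndicator_iff_isClopen B).2 hB
  set g : StoneCech X → Bool := stoneCechExtend hf with hgdef
  have hg : Continuous g := continuous_stoneCechExtend hf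
  have hgext : ∀ z : X, g (stoneCechUnit z) = B.boolIndicator z :=
    fun z => congrFun (stoneCechExtend_extends hf) z
  refine ⟨g ⁻¹' {true}, (isClopen_discrete _).preimage hg, ?_, ?_⟩
  · -- x ∈ g⁻¹' {true}
    have h1 : interior Nx ⊆ closure (interior Nx ∩ Set.range stoneCechUnit) :=
      denseRange_stoneCechUnit.open_subset_closure_inter isOpen_interior
    have h2 : interior Nx ∩ Set.range stoneCechUnit ⊆ g ⁻¹' {true} := by
      rintro w ⟨hw, z, rfl⟩
      have hzC : z ∈ C := mem_preimage.2 (interior_subset hw)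
      have : B.boolIndicator z = true := (B.mem_iff_boolIndicator z).1 (hCB hzC)
      simp [mem_preimage, hgext z, this]
    have hclosed : IsClosed (g ⁻¹' {true}) :=
      (isClopen_discrete ({true} : Set Bool)).isClosed.preimage hg
    exact hclosed.closure_subset ((closure_mono h2) (h1 (mem_interior_iff_mem_nhds.2 hNx_mem)))
  · -- y ∉ g⁻¹' {true}, i.e. y ∈ complement
    have h1 : interior Ny ⊆ closure (interior Ny ∩ Set.range stoneCechUnit) :=
      denseRange_stoneCechUnit.open_subset_closure_inter isOpen_interior
    have h2 : interior Ny ∩ Set.range stoneCechUnit ⊆ g ⁻¹' {false} := by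
      rintro w ⟨hw, z, rfl⟩
      have hzD : z ∈ D := mem_preimage.2 (interior_subset hw)
      have hzB : z ∉ B := fun hzB => hBD.le_bot ⟨hzB, hzD⟩
      have : B.boolIndicator z = false := (B.notMem_iff_boolIndicator z).1 hzB
      simp [mem_preimage, hgext z, this]
    have hclosed : IsClosed (g ⁻¹' {false}) :=
      (isClopen_discrete ({false} : Set Bool)).isClosed.preimage hg
    have hy : y ∈ g ⁻¹' {false} :=
      hclosed.closure_subset ((closure_mono h2) (h1 (mem_interior_iff_mem_nhds.2 hNy_mem)))
    simp only [mem_compl_iff, mem_preimage, mem_singleton_iff] at hy ⊢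
    simp [hy]
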